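/- For nonnegative integers m, n and any x, (-1)^m * sum_{k=0}^{m} binomial(m+1,k) * (n+k+1) * E_{n+k}(x) + (-1)^n * sum_{k=0}^{n} binomial(n+1,k) * (m+k+1) * E_{m+k}(-x) = (-1)^m * 2 * (n+m+2) * (x^{n+m+1} - E_{n+m+1}(x)). -/

import Mathlib

open Finset

/-- The Euler polynomials `E n`, defined by the recurrence
`E n = X^n - (1/2) * ∑_{k<n} (n choose k) E k`, equivalent to the
generating function `2 e^{xt}/(e^t+1) = ∑ E_n(x) t^n/n!`. -/
noncomputable def eulerPoly : ℕ → Polynomial ℚ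
  | n => Polynomial.X ^ n - Polynomial.C (1/2 : ℚ) *
      ∑ k : Fin n, Polynomial.C ((n.choose k : ℚ)) * eulerPoly k

open Polynomial

lemma eulerPoly_eq (n : ℕ) : eulerPoly n = X ^ n - C (1/2 : ℚ) *
    ∑ k ∈ range n, C ((n.choose k : ℚ)) * eulerPoly k := by
  rw [eulerPoly]
  rw [Fin.sum_univ_eq_sum_range (fun k => C ((n.choose k : ℚ)) * eulerPoly k) n]

/-- eval version of the defining recurrence -/
lemma euler_eval (n : ℕ) (x : ℚ) : (eulerPoly n).eval x =
    x ^ n - (1/2 : ℚ) * ∑ k ∈ range n, (n.choose k : ℚ) * (eulerPoly k).eval x := by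
  conv_lhs => rw [eulerPoly_eq]
  simp [eval_finset_sum]

/-- full-sum identity -/
lemma euler_sum (n : ℕ) (x : ℚ) :
    ∑ k ∈ range (n+1), (n.choose k : ℚ) * (eulerPoly k).eval x
      = 2 * x ^ n - (eulerPoly n).eval x := by
  rw [Finset.sum_range_succ, euler_eval n x]
  have h := euler_eval n x
  simp [Nat.choose_self]
  linarith [euler_eval n x]

/-- complement identity -/
lemma euler_comp (n : ℕ) (x : ℚ) :
    (eulerPoly n).eval (x+1) + (eulerPoly n).eval x = 2 * x ^ n := by
  induction n using Nat.strong_induction_on generalizing x with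
  | _ n ih =>
    rw [euler_eval n (x+1), euler_eval n x]
    have hs : ∑ k ∈ range n, (n.choose k : ℚ) * (eulerPoly k).eval (x+1)
        = ∑ k ∈ range n, ((n.choose k : ℚ) * (2 * x ^ k) - (n.choose k : ℚ) * (eulerPoly k).eval x) := by
      apply Finset.sum_congr rfl
      intro k hk
      have h := ih k (Finset.mem_range.mp hk) x
      linear_combination (n.choose k : ℚ) * h
    rw [hs, Finset.sum_sub_distrib]
    have hb : ∑ k ∈ range n, (n.choose k : ℚ) * (2 * x ^ k)
        = 2 * ((x+1)^n - x^n) := by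
      have hbin := add_pow x 1 n
      have h2 : ∑ k ∈ range (n+1), (n.choose k : ℚ) * x ^ k = (x+1)^n := by
        rw [hbin]
        apply Finset.sum_congr rfl
        intro k hk
        ring
      have h3 : ∑ k ∈ range (n+1), (n.choose k : ℚ) * x ^ k
          = (∑ k ∈ range n, (n.choose k : ℚ) * x ^ k) + x ^ n := by
        rw [Finset.sum_range_succ, Nat.choose_self]; push_cast; ring
      have h4 : (∑ k ∈ range n, (n.choose k : ℚ) * x ^ k) = (x+1)^n - x^n := by
        linarith [h2, h3]
      calc ∑ k ∈ range n, (n.choose k:ℚ) * (2 * x ^ k) = 2 * ∑ k ∈ range n, (n.choose k:ℚ) * x ^ k := by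
            rw [Finset.mul_sum]; apply Finset.sum_congr rfl; intros; ring
        _ = 2 * ((x+1)^n - x^n) := by rw [h4]
    rw [hb]
    ring

lemma euler_deriv (n : ℕ) :
    derivative (eulerPoly (n+1)) = C ((n : ℚ)+1) * eulerPoly n := by
  induction n using Nat.strong_induction_on with
  | _ n ih =>
    rw [eulerPoly_eq (n+1)]
    rw [derivative_sub, derivative_X_pow, derivative_mul, derivative_C, derivative_sum]
    have hsum : ∑ k ∈ range (n+1), derivative (C (((n+1).choose k : ℚ)) * eulerPoly k)
        = ∑ j ∈ range n, C (((n+1).choose (j+1) : ℚ)) * (C ((j:ℚ)+1) * eulerPoly j) := by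
      rw [Finset.sum_range_succ' _ n]
      have h0 : derivative (C (((n+1).choose 0 : ℚ)) * eulerPoly 0) = 0 := by
        have : eulerPoly 0 = 1 := by rw [eulerPoly_eq]; simp
        simp [this]
      rw [h0, add_zero]
      apply Finset.sum_congr rfl
      intro j hj
      rw [derivative_C_mul, ih j (Finset.mem_range.mp hj)]
    rw [hsum]
    have hc : ∀ j ∈ range n, C (((n+1).choose (j+1) : ℚ)) * (C ((j:ℚ)+1) * eulerPoly j)
        = C ((n:ℚ)+1) * (C ((n.choose j : ℚ)) * eulerPoly j) := by
      intro j hj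
      have : (n+1) * n.choose j = (n+1).choose (j+1) * (j+1) := Nat.add_one_mul_choose_eq n j
      have hq : (((n+1).choose (j+1) : ℚ)) * ((j:ℚ)+1) = ((n:ℚ)+1) * (n.choose j : ℚ) := by
        push_cast
        exact_mod_cast congrArg (Nat.cast (R := ℚ)) this.symm
      rw [← mul_assoc, ← C_mul, hq, C_mul, mul_assoc]
    rw [Finset.sum_congr rfl hc, ← Finset.mul_sum]
    rw [eulerPoly_eq n]
    push_cast
    ring

lemma poly_eq_of_deriv {p q : Polynomial ℚ} (h : derivative p = derivative q)
    (h0 : p.eval 0 = q.eval 0) : p = q := by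
  have hd : derivative (p - q) = 0 := by rw [derivative_sub, h, sub_self]
  have hC := Polynomial.eq_C_of_natDegree_eq_zero
    (Polynomial.natDegree_eq_zero_of_derivative_eq_zero hd)
  have hc : (p - q).coeff 0 = 0 := by
    rw [coeff_sub, Polynomial.coeff_zero_eq_eval_zero, Polynomial.coeff_zero_eq_eval_zero, h0,
      sub_self]
  rw [hc] at hC
  simpa [sub_eq_zero] using hC

/-- addition formula (polynomial in the second variable) -/
lemma euler_add_poly (n : ℕ) (x : ℚ) :
    (eulerPoly n).comp (C x + X) =
      ∑ k ∈ range (n+1), C ((n.choose k : ℚ) * (eulerPoly k).eval x) * X ^ (n - k) := by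
  induction n with
  | zero =>
    have h0 : eulerPoly 0 = 1 := by rw [eulerPoly_eq]; simp
    simp [h0]
  | succ n ih =>
    apply poly_eq_of_deriv
    · rw [derivative_comp, euler_deriv n, derivative_sum]
      have hr : ∑ k ∈ range (n+2), derivative (C (((n+1).choose k : ℚ) * (eulerPoly k).eval x) * X ^ (n+1-k))
          = ∑ k ∈ range (n+1), C (((n:ℚ)+1) * ((n.choose k : ℚ) * (eulerPoly k).eval x)) * X ^ (n-k) := by
        rw [Finset.sum_range_succ]
        have hlast : derivative (C (((n+1).choose (n+1) : ℚ) * (eulerPoly (n+1)).eval x) * X ^ (n+1-(n+1))) = 0 := by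
          simp
        rw [hlast, add_zero]
        apply Finset.sum_congr rfl
        intro k hk
        have hk' : k < n + 1 := Finset.mem_range.mp hk
        rw [derivative_C_mul, derivative_X_pow]
        have h1 : n + 1 - k - 1 = n - k := by omega
        rw [h1]
        rw [← mul_assoc, ← C_mul]
        congr 2
        have hnat : n.choose k * (n + 1) = (n + 1).choose k * (n + 1 - k) :=
          Nat.choose_mul_succ_eq n k
        have : ((n.choose k : ℚ)) * ((n:ℚ) + 1) = ((n+1).choose k : ℚ) * ((n + 1 - k : ℕ) : ℚ) := by
          exact_mod_cast congrArg (Nat.cast (R := ℚ)) hnat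
        linear_combination (-(eval x (eulerPoly k))) * this
      rw [hr]
      rw [derivative_add, derivative_C, derivative_X, zero_add, one_mul, mul_comp, C_comp, ih,
        Finset.mul_sum]
      apply Finset.sum_congr rfl
      intro k hk
      rw [← mul_assoc, ← C_mul]
    · rw [eval_comp]
      simp only [eval_add, eval_C, eval_X, add_zero]
      rw [eval_finset_sum, Finset.sum_range_succ]
      have hz : ∑ k ∈ range (n+1), eval 0 (C (((n+1).choose k : ℚ) * (eulerPoly k).eval x) * X ^ (n+1-k)) = 0 := by
        apply Finset.sum_eq_zero
        intro k hk
        have : n + 1 - k ≠ 0 := by have := Finset.mem_range.mp hk; omega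
        simp [zero_pow this]
      rw [hz, zero_add]
      simp

/-- eval version -/
lemma euler_add (n : ℕ) (x y : ℚ) :
    (eulerPoly n).eval (x + y) =
      ∑ k ∈ range (n+1), (n.choose k : ℚ) * (eulerPoly k).eval x * y ^ (n - k) := by
  have := congrArg (Polynomial.eval y) (euler_add_poly n x)
  rw [eval_comp] at this
  simp only [eval_add, eval_C, eval_X] at this
  rw [this, eval_finset_sum]
  apply Finset.sum_congr rfl
  intro k hk
  simp

/-- alternating sum: `∑ C(n,k)(-1)^k E_k(x) = (-1)^n E_n(x-1)` -/
lemma euler_alt (n : ℕ) (x : ℚ) :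
    ∑ k ∈ range (n+1), (n.choose k : ℚ) * (-1)^k * (eulerPoly k).eval x
      = (-1)^n * (eulerPoly n).eval (x - 1) := by
  have h := euler_add n x (-1)
  have : x + (-1) = x - 1 := by ring
  rw [this] at h
  rw [h, Finset.mul_sum]
  apply Finset.sum_congr rfl
  intro k hk
  have hk' : k < n + 1 := Finset.mem_range.mp hk
  have hpar : ((-1:ℚ))^n * (-1)^(n-k) = (-1)^k := by
    have hnk : ((-1:ℚ))^n = (-1)^(n-k) * (-1)^k := by
      rw [← pow_add]; congr 1; omega
    have h2 : ((-1:ℚ))^(n-k) * (-1)^(n-k) = 1 := by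
      rw [← pow_add]; exact Even.neg_one_pow ⟨n-k, rfl⟩
    rw [hnk]
    linear_combination ((-1:ℚ))^k * h2
  calc (n.choose k : ℚ) * (-1)^k * (eulerPoly k).eval x
      = (n.choose k : ℚ) * ((-1)^n * (-1)^(n-k)) * (eulerPoly k).eval x := by rw [hpar]
    _ = (-1)^n * ((n.choose k : ℚ) * (eulerPoly k).eval x * (-1)^(n-k)) := by ring

/-- reflection: `E_n(-x) = (-1)^n (2x^n - E_n(x))` -/
lemma euler_neg (n : ℕ) (x : ℚ) :
    (eulerPoly n).eval (-x) = (-1)^n * (2 * x ^ n - (eulerPoly n).eval x) := by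
  induction n using Nat.strong_induction_on generalizing x with
  | _ n ih =>
    rw [euler_eval n (-x)]
    have hs : ∑ k ∈ range n, (n.choose k : ℚ) * (eulerPoly k).eval (-x)
        = ∑ k ∈ range n, ((n.choose k : ℚ) * ((-1)^k * 2 * x^k) - (n.choose k : ℚ) * (-1)^k * (eulerPoly k).eval x) := by
      apply Finset.sum_congr rfl
      intro k hk
      have h := ih k (Finset.mem_range.mp hk) x
      linear_combination (n.choose k : ℚ) * h
    rw [hs, Finset.sum_sub_distrib]
    -- binomial sum: ∑_{k<n} C(n,k)(-1)^k 2 x^k = 2((1-x)^n - (-x)^n)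
    have hb : ∑ k ∈ range n, (n.choose k : ℚ) * ((-1)^k * 2 * x^k)
        = 2 * ((1-x)^n - (-x)^n) := by
      have hbin := add_pow (-x) 1 n
      have h2 : ((-x) + 1)^n = ∑ k ∈ range (n+1), (n.choose k : ℚ) * ((-1)^k * x^k) := by
        rw [hbin]
        apply Finset.sum_congr rfl
        intro k hk
        ring
      have h3 : ∑ k ∈ range (n+1), (n.choose k : ℚ) * ((-1)^k * x^k)
          = (∑ k ∈ range n, (n.choose k : ℚ) * ((-1)^k * x^k)) + (-1)^n * x^n := by
        rw [Finset.sum_range_succ, Nat.choose_self]; push_cast; ring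
      have h4 : ((-x)+1)^n = (1-x)^n := by ring_nf
      have h5 : (∑ k ∈ range n, (n.choose k : ℚ) * ((-1)^k * x^k)) = (1-x)^n - (-1)^n * x^n := by
        rw [← h4, h2, h3]; ring
      calc ∑ k ∈ range n, (n.choose k : ℚ) * ((-1)^k * 2 * x^k)
          = 2 * ∑ k ∈ range n, (n.choose k : ℚ) * ((-1)^k * x^k) := by
            rw [Finset.mul_sum]; apply Finset.sum_congr rfl; intros; ring
        _ = 2 * ((1-x)^n - (-x)^n) := by rw [h5]; ring_nf
    -- alternating euler sum, partial: ∑_{k<n} C(n,k)(-1)^k E_k(x) = (-1)^n (E_n(x-1) - E_n(x))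
    have ha : ∑ k ∈ range n, (n.choose k : ℚ) * (-1)^k * (eulerPoly k).eval x
        = (-1)^n * ((eulerPoly n).eval (x-1) - (eulerPoly n).eval x) := by
      have h := euler_alt n x
      rw [Finset.sum_range_succ, Nat.choose_self] at h
      push_cast at h
      linear_combination h
    rw [hb, ha]
    -- complement at x-1 : E_n(x) + E_n(x-1) = 2 (x-1)^n
    have hc : (eulerPoly n).eval x + (eulerPoly n).eval (x-1) = 2 * (x-1)^n := by
      have := euler_comp n (x-1)
      have h1 : x - 1 + 1 = x := by ring
      rw [h1] at this
      linarith [this]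
    have hsign : ((-1:ℚ))^n * (x-1)^n = (1-x)^n := by
      rw [← neg_one_mul, ← mul_pow]; ring_nf
    have hx : ((-x):ℚ)^n = (-1)^n * x^n := by
      rw [neg_pow]
    linear_combination (1/2 * (-1:ℚ)^n) * hc + hsign + 2 * hx

lemma sum_pascal (f : ℕ → ℚ) (M : ℕ) :
    ∑ k ∈ range (M+2), ((M+1).choose k : ℚ) * f k
      = ∑ k ∈ range (M+1), (M.choose k:ℚ) * f (k+1)
        + ∑ k ∈ range (M+1), (M.choose k:ℚ) * f k := by
  rw [Finset.sum_range_succ' (fun k => ((M+1).choose k : ℚ) * f k) (M+1)]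
  have h1 : ∀ j ∈ range (M+1), ((M+1).choose (j+1) : ℚ) * f (j+1)
      = (M.choose j : ℚ) * f (j+1) + (M.choose (j+1) : ℚ) * f (j+1) := by
    intro j hj
    rw [Nat.choose_succ_succ]
    push_cast
    ring
  rw [Finset.sum_congr rfl h1, Finset.sum_add_distrib]
  have h2 : ∑ j ∈ range (M+1), (M.choose (j+1) : ℚ) * f (j+1) + ((M+1).choose 0 : ℚ) * f 0
      = ∑ k ∈ range (M+1), (M.choose k:ℚ) * f k := by
    have h0 : ((M+1).choose 0 : ℚ) * f 0 = (M.choose 0 : ℚ) * f 0 := by norm_num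
    rw [h0, ← Finset.sum_range_succ' (fun k => (M.choose k : ℚ) * f k) (M+1),
      Finset.sum_range_succ]
    simp [Nat.choose_eq_zero_of_lt (by omega : M < M+1)]
  rw [add_assoc, h2]

lemma euler_base (M N : ℕ) (x : ℚ) :
    (-1:ℚ)^(M+1) * ((∑ k ∈ range (M+1), (M.choose k:ℚ) * (eulerPoly (N+k)).eval x)
        - (eulerPoly (N+M)).eval x)
    + (-1:ℚ)^N * ((∑ k ∈ range (N+1), (N.choose k:ℚ) * (eulerPoly (M+k)).eval (-x))
        - (eulerPoly (N+M)).eval (-x))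
    = (-1:ℚ)^(M+1) * 2 * (x^(N+M) - (eulerPoly (N+M)).eval x) := by
  induction M generalizing N x with
  | zero =>
    simp only [Nat.zero_add, Nat.add_zero, Finset.sum_range_one, Nat.choose_self,
      Nat.cast_one, one_mul, Nat.choose_zero_right]
    rw [euler_sum N (-x)]
    have hn := euler_neg N x
    have hx : ((-x):ℚ)^N = (-1)^N * x^N := by rw [neg_pow]
    have hb : ((-1:ℚ))^N * (-1)^N = 1 := by
      rw [← pow_add]; exact Even.neg_one_pow ⟨N, rfl⟩
    rw [hn, hx]
    linear_combination (2 * (eulerPoly N).eval x - 2 * x^N) * hb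
  | succ M ih =>
    have IH1 := ih N x
    have IH2 := ih (N+1) x
    -- pascal expansions
    have hA : ∑ k ∈ range (M+2), ((M+1).choose k:ℚ) * (eulerPoly (N+k)).eval x
        = (∑ k ∈ range (M+1), (M.choose k:ℚ) * (eulerPoly (N+1+k)).eval x)
          + ∑ k ∈ range (M+1), (M.choose k:ℚ) * (eulerPoly (N+k)).eval x := by
      rw [sum_pascal (fun k => (eulerPoly (N+k)).eval x) M]
      congr 1
      exact Finset.sum_congr rfl (fun k _ => by rw [show N+(k+1) = N+1+k from by omega])
    have hB : ∑ k ∈ range (N+2), ((N+1).choose k:ℚ) * (eulerPoly (M+k)).eval (-x)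
        = (∑ k ∈ range (N+1), (N.choose k:ℚ) * (eulerPoly (M+1+k)).eval (-x))
          + ∑ k ∈ range (N+1), (N.choose k:ℚ) * (eulerPoly (M+k)).eval (-x) := by
      rw [sum_pascal (fun k => (eulerPoly (M+k)).eval (-x)) N]
      congr 1
      exact Finset.sum_congr rfl (fun k _ => by rw [show M+(k+1) = M+1+k from by omega])
    rw [hB] at IH2
    rw [hA]
    -- index normalizations
    have e1 : N + 1 + M = N + (M+1) := by omega
    rw [e1] at IH2
    -- reflection for e_(N+M)(-x)
    have hn0 : (eulerPoly (N+M)).eval (-x)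
        = (-1)^N * (-1)^M * (2 * x^(N+M) - (eulerPoly (N+M)).eval x) := by
      rw [euler_neg (N+M) x, pow_add]
    have hb2 : ((-1:ℚ))^N * (-1)^N = 1 := by
      rw [← pow_add]; exact Even.neg_one_pow ⟨N, rfl⟩
    linear_combination (-1 : ℚ) * IH1 + (-1:ℚ) * IH2 + (-(-1:ℚ)^N) * hn0
      + (-((-1:ℚ)^M * (2 * x^(N+M) - (eulerPoly (N+M)).eval x))) * hb2

theorem wu_sun_pan_euler_poly_deriv (m n : ℕ) (x : ℚ) :
    (-1 : ℚ) ^ m * ∑ k ∈ range (m + 1),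
        ((m + 1).choose k : ℚ) * (n + k + 1) * (eulerPoly (n + k)).eval x
      + (-1 : ℚ) ^ n * ∑ k ∈ range (n + 1),
        ((n + 1).choose k : ℚ) * (m + k + 1) * (eulerPoly (m + k)).eval (-x)
    = (-1 : ℚ) ^ m * 2 * (n + m + 2) * (x ^ (n + m + 1) - (eulerPoly (n + m + 1)).eval x) := by
  -- polynomial version of the base identity with M = m+1, N = n+1
  have hpoly : (C ((-1:ℚ)^(m+1+1)) * ((∑ k ∈ range (m+2), C (((m+1).choose k : ℚ)) * eulerPoly (n+k+1)) - eulerPoly (n+m+1+1)))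
      + (C ((-1:ℚ)^(n+1)) * ((∑ k ∈ range (n+2), C (((n+1).choose k : ℚ)) * (eulerPoly (m+k+1)).comp (-X)) - (eulerPoly (n+m+1+1)).comp (-X)))
      = C ((-1:ℚ)^(m+1+1) * 2) * (X^(n+m+1+1) - eulerPoly (n+m+1+1)) := by
    apply Polynomial.funext
    intro r
    have hb := euler_base (m+1) (n+1) r
    rw [show (n+1)+(m+1) = n+m+1+1 from by omega] at hb
    have h1 : ∑ k ∈ range (m+2), ((m+1).choose k : ℚ) * (eulerPoly (n+1+k)).eval r
        = ∑ k ∈ range (m+2), ((m+1).choose k : ℚ) * (eulerPoly (n+k+1)).eval r :=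
      Finset.sum_congr rfl (fun k _ => by rw [show n+1+k = n+k+1 from by omega])
    have h2 : ∑ k ∈ range (n+2), ((n+1).choose k : ℚ) * (eulerPoly (m+1+k)).eval (-r)
        = ∑ k ∈ range (n+2), ((n+1).choose k : ℚ) * (eulerPoly (m+k+1)).eval (-r) :=
      Finset.sum_congr rfl (fun k _ => by rw [show m+1+k = m+k+1 from by omega])
    rw [h1, h2] at hb
    simp only [eval_add, eval_mul, eval_C, eval_sub, eval_finset_sum, eval_comp, eval_neg,
      eval_X, eval_pow]
    linear_combination hb
  have hd := congrArg derivative hpoly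
  simp only [derivative_add, derivative_sub, derivative_C_mul, derivative_sum, derivative_comp,
    euler_deriv, derivative_X_pow, derivative_neg, derivative_X] at hd
  have he := congrArg (Polynomial.eval x) hd
  simp only [eval_add, eval_mul, eval_C, eval_sub, eval_finset_sum, eval_comp, eval_neg,
    eval_X, eval_pow, eval_natCast, eval_one, neg_mul, one_mul, mul_neg, neg_neg,
    Finset.sum_neg_distrib] at he
  push_cast at he ⊢
  have hA : ∑ k ∈ range (m+2), ((m+1).choose k : ℚ) * (((n:ℚ) + (k:ℚ) + 1) * (eulerPoly (n+k)).eval x)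
      = (∑ k ∈ range (m+1), ((m+1).choose k : ℚ) * ((n:ℚ) + (k:ℚ) + 1) * (eulerPoly (n+k)).eval x)
        + ((n:ℚ)+(m:ℚ)+2) * (eulerPoly (n+m+1)).eval x := by
    rw [Finset.sum_range_succ, show n+(m+1) = n+m+1 from by omega, Nat.choose_self]
    push_cast
    congr 1
    · exact Finset.sum_congr rfl fun k _ => by ring
    · ring
  have hB : ∑ k ∈ range (n+2), ((n+1).choose k : ℚ) * (((m:ℚ) + (k:ℚ) + 1) * (eulerPoly (m+k)).eval (-x))
      = (∑ k ∈ range (n+1), ((n+1).choose k : ℚ) * ((m:ℚ) + (k:ℚ) + 1) * (eulerPoly (m+k)).eval (-x))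
        + ((n:ℚ)+(m:ℚ)+2) * (eulerPoly (n+m+1)).eval (-x) := by
    rw [Finset.sum_range_succ, show m+(n+1) = n+m+1 from by omega, Nat.choose_self]
    push_cast
    congr 1
    · exact Finset.sum_congr rfl fun k _ => by ring
    · ring
  linear_combination he - ((-1:ℚ)^m) * hA - ((-1:ℚ)^n) * hB
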